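/- For u, v ∈ {0,1}^n with d = d_H(u,v) ≤ 2ε and ε/n < 1/2, the normalized intersection volume satisfies I^ε_d ≤ 2^{n(h((ε - ⌈d/2⌉)/n) - 1) + d} ≤ 2^{n(h(ε/n) - 1) + d} · ((ε/n)/(1 - ε/n))^{⌈d/2⌉}, where h is the binary entropy function. -/

import Mathlib

/-- Binary entropy function (base 2), with the convention `logb 2 0 = 0`. -/
noncomputable def binH (x : ℝ) : ℝ := -x * Real.logb 2 x - (1 - x) * Real.logb 2 (1 - x)

/-- Normalized volume of the intersection of two Hamming `ε`-balls in `{0,1}^n`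
whose centers are at Hamming distance `d`. -/
noncomputable def Iball (n ε d : ℕ) : ℝ :=
  (∑ k ∈ Finset.Icc (d - ε) (min ε d),
      (d.choose k : ℝ) *
        ∑ i ∈ Finset.range (min (ε - k) (ε + k - d) + 1), ((n - d).choose i : ℝ)) / 2 ^ n

open Finset

lemma binH_zero : binH 0 = 0 := by simp [binH]

lemma natN_le (n ε d : ℕ) :
    ∑ k ∈ Icc (d - ε) (min ε d),
        d.choose k * ∑ i ∈ range (min (ε - k) (ε + k - d) + 1), (n - d).choose i
      ≤ 2 ^ d * ∑ i ∈ range (ε - (d + 1) / 2 + 1), n.choose i := by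
  calc ∑ k ∈ Icc (d - ε) (min ε d),
        d.choose k * ∑ i ∈ range (min (ε - k) (ε + k - d) + 1), (n - d).choose i
      ≤ ∑ k ∈ Icc (d - ε) (min ε d),
          d.choose k * ∑ i ∈ range (ε - (d + 1) / 2 + 1), n.choose i := by
        apply Finset.sum_le_sum
        intro k _
        apply Nat.mul_le_mul (le_refl _)
        calc ∑ i ∈ range (min (ε - k) (ε + k - d) + 1), (n - d).choose i
            ≤ ∑ i ∈ range (min (ε - k) (ε + k - d) + 1), n.choose i :=
              Finset.sum_le_sum fun i _ => Nat.choose_le_choose i (Nat.sub_le n d)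
          _ ≤ ∑ i ∈ range (ε - (d + 1) / 2 + 1), n.choose i := by
              apply Finset.sum_le_sum_of_subset
              apply Finset.range_subset_range.2
              omega
    _ ≤ ∑ k ∈ range (d + 1), d.choose k * ∑ i ∈ range (ε - (d + 1) / 2 + 1), n.choose i := by
        apply Finset.sum_le_sum_of_subset
        intro k hk
        simp only [Finset.mem_Icc, Finset.mem_range] at *
        omega
    _ = 2 ^ d * ∑ i ∈ range (ε - (d + 1) / 2 + 1), n.choose i := by
        rw [← Finset.sum_mul, Nat.sum_range_choose]

lemma sum_choose_le (n a : ℕ) (hn : 0 < n) (h2a : 2 * a ≤ n) :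
    (∑ i ∈ range (a + 1), (n.choose i : ℝ)) ≤ 2 ^ ((n : ℝ) * binH ((a : ℝ) / n)) := by
  have hn' : (0:ℝ) < n := by exact_mod_cast hn
  rcases Nat.eq_zero_or_pos a with rfl | ha
  · simp [binH_zero]
  · have ha' : (0:ℝ) < a := by exact_mod_cast ha
    set q : ℝ := (a : ℝ) / n with hqdef
    have hq0 : 0 < q := by positivity
    have hq2 : q ≤ 1/2 := by
      rw [hqdef, div_le_iff₀ hn']
      have : ((2*a:ℕ):ℝ) ≤ (n:ℝ) := by exact_mod_cast h2a
      push_cast at this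
      linarith
    have h1q : 0 < 1 - q := by linarith
    have hqq : q ≤ 1 - q := by linarith
    have ht : 0 < q ^ a * (1 - q) ^ (n - a) := by positivity
    have step1 : ∀ i ∈ range (a + 1), q ^ a * (1 - q) ^ (n - a) ≤ q ^ i * (1 - q) ^ (n - i) := by
      intro i hi
      simp only [Finset.mem_range] at hi
      have hia : i ≤ a := by omega
      have h3 : q ^ (a - i) ≤ (1 - q) ^ (a - i) := pow_le_pow_left₀ hq0.le hqq _
      calc q ^ a * (1 - q) ^ (n - a)
          = q ^ i * q ^ (a - i) * (1 - q) ^ (n - a) := by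
            rw [← pow_add]
            congr 2
            omega
        _ ≤ q ^ i * (1 - q) ^ (a - i) * (1 - q) ^ (n - a) :=
            mul_le_mul_of_nonneg_right
              (mul_le_mul_of_nonneg_left h3 (pow_nonneg hq0.le i))
              (pow_nonneg h1q.le _)
        _ = q ^ i * (1 - q) ^ (n - i) := by
            rw [mul_assoc, ← pow_add]
            congr 2
            omega
    have step2 : (∑ i ∈ range (a + 1), (n.choose i : ℝ)) * (q ^ a * (1 - q) ^ (n - a)) ≤ 1 := by
      calc (∑ i ∈ range (a + 1), (n.choose i : ℝ)) * (q ^ a * (1 - q) ^ (n - a))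
          = ∑ i ∈ range (a + 1), (n.choose i : ℝ) * (q ^ a * (1 - q) ^ (n - a)) :=
            Finset.sum_mul _ _ _
        _ ≤ ∑ i ∈ range (a + 1), (n.choose i : ℝ) * (q ^ i * (1 - q) ^ (n - i)) :=
            Finset.sum_le_sum fun i hi =>
              mul_le_mul_of_nonneg_left (step1 i hi) (by positivity)
        _ ≤ ∑ i ∈ range (n + 1), (n.choose i : ℝ) * (q ^ i * (1 - q) ^ (n - i)) := by
            apply Finset.sum_le_sum_of_subset_of_nonneg
            · exact Finset.range_subset_range.2 (by omega)
            · intro i _ _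
              positivity
        _ = (q + (1 - q)) ^ n := by
            rw [add_pow]
            exact Finset.sum_congr rfl fun i _ => by ring
        _ = 1 := by norm_num
    have hS : (∑ i ∈ range (a + 1), (n.choose i : ℝ)) ≤ (q ^ a * (1 - q) ^ (n - a))⁻¹ := by
      rw [← one_div, le_div_iff₀ ht]
      exact step2
    have hna : a ≤ n := by omega
    have h1 : (n:ℝ) * q = a := by
      rw [hqdef, mul_div_cancel₀ _ hn'.ne']
    have h2 : (n:ℝ) * (1 - q) = ((n - a : ℕ) : ℝ) := by
      rw [Nat.cast_sub hna, hqdef, mul_sub, mul_one, mul_div_cancel₀ _ hn'.ne']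
    have hE : (n:ℝ) * binH q
        = Real.logb 2 q * (-(a:ℝ)) + Real.logb 2 (1 - q) * (-((n - a : ℕ):ℝ)) := by
      rw [binH]
      linear_combination (- Real.logb 2 q) * h1 + (- Real.logb 2 (1 - q)) * h2
    calc (∑ i ∈ range (a + 1), (n.choose i : ℝ)) ≤ (q ^ a * (1 - q) ^ (n - a))⁻¹ := hS
      _ = 2 ^ ((n : ℝ) * binH q) := by
          rw [hE, Real.rpow_add two_pos, Real.rpow_mul (by norm_num : (0:ℝ) ≤ 2),
            Real.rpow_mul (by norm_num : (0:ℝ) ≤ 2),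
            Real.rpow_logb two_pos (by norm_num) hq0,
            Real.rpow_logb two_pos (by norm_num) h1q,
            Real.rpow_neg hq0.le, Real.rpow_neg h1q.le,
            Real.rpow_natCast, Real.rpow_natCast, mul_inv]

theorem intersection_entropy_upper_bounds (n ε d : ℕ) (u v : Fin n → Bool)
    (hd : hammingDist u v = d) (hd2 : d ≤ 2 * ε) (hhalf : (ε : ℝ) / n < 1/2) :
    Iball n ε d ≤
      (2 : ℝ) ^ ((n : ℝ) * (binH (((ε : ℝ) - ((d + 1) / 2 : ℕ)) / n) - 1) + d) ∧
    (2 : ℝ) ^ ((n : ℝ) * (binH (((ε : ℝ) - ((d + 1) / 2 : ℕ)) / n) - 1) + d) ≤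
      (2 : ℝ) ^ ((n : ℝ) * (binH ((ε : ℝ) / n) - 1) + d) *
        (((ε : ℝ) / n) / (1 - (ε : ℝ) / n)) ^ ((d + 1) / 2) := by
  have hca : (d + 1) / 2 ≤ ε := by omega
  have hcast : (ε : ℝ) - (((d + 1) / 2 : ℕ) : ℝ) = ((ε - (d + 1) / 2 : ℕ) : ℝ) :=
    (Nat.cast_sub hca).symm
  rw [hcast]
  rcases Nat.eq_zero_or_pos n with rfl | hn
  · -- n = 0
    have hd0 : d = 0 := by
      have h := hammingDist_le_card_fintype (x := u) (y := v)
      rw [hd] at h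
      simpa using h
    subst hd0
    have hI : Iball 0 ε 0 = 1 := by
      rw [Iball]
      simp only [Nat.zero_sub, Nat.sub_zero, Nat.add_zero, _root_.min_zero, min_self,
        Nat.sub_self, Finset.Icc_self, Finset.sum_singleton, Nat.choose_self, Nat.cast_one,
        one_mul, pow_zero, div_one]
      rw [Finset.sum_eq_single_of_mem 0 (Finset.mem_range.2 (Nat.succ_pos ε))]
      · norm_num
      · intro b _ hb
        simp [Nat.choose_eq_zero_of_lt (Nat.pos_of_ne_zero hb)]
    constructor
    · rw [hI]
      have : ((0:ℕ):ℝ) * (binH (((ε - (0+1)/2 : ℕ):ℝ) / ((0:ℕ):ℝ)) - 1) + ((0:ℕ):ℝ) = 0 := by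
        push_cast
        ring
      rw [this, Real.rpow_zero]
    · have hc0 : (0 + 1) / 2 = 0 := by norm_num
      simp only [hc0, pow_zero, mul_one, Nat.sub_zero]
      exact le_refl _
  · -- n > 0
    have hn' : (0:ℝ) < n := by exact_mod_cast hn
    have h2e : 2 * ε < n := by
      have h := (div_lt_iff₀ hn').1 hhalf
      have : ((2*ε:ℕ):ℝ) < (n:ℝ) := by push_cast; linarith
      exact_mod_cast this
    set c : ℕ := (d + 1) / 2 with hcdef
    set a : ℕ := ε - c with hadef
    have h2a : 2 * a ≤ n := by omega
    have hacast : (a:ℝ) = (ε:ℝ) - (c:ℝ) := by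
      rw [hadef, Nat.cast_sub hca]
    constructor
    · -- first inequality
      have hS := sum_choose_le n a hn h2a
      calc Iball n ε d
          = ((∑ k ∈ Icc (d - ε) (min ε d),
              d.choose k * ∑ i ∈ range (min (ε - k) (ε + k - d) + 1), (n - d).choose i : ℕ) : ℝ)
              / 2 ^ n := by
            rw [Iball]
            push_cast
            rfl
        _ ≤ ((2 ^ d * ∑ i ∈ range (a + 1), n.choose i : ℕ) : ℝ) / 2 ^ n := by
            gcongr
            exact_mod_cast natN_le n ε d
        _ = 2 ^ d * (∑ i ∈ range (a + 1), (n.choose i : ℝ)) / 2 ^ n := by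
            push_cast
            ring
        _ ≤ 2 ^ d * (2 : ℝ) ^ ((n : ℝ) * binH ((a : ℝ) / n)) / 2 ^ n := by gcongr
        _ = 2 ^ ((n : ℝ) * (binH ((a : ℝ) / n) - 1) + d) := by
            rw [show (n:ℝ) * (binH ((a:ℝ)/n) - 1) + d
                = (n:ℝ) * binH ((a:ℝ)/n) + ((d:ℝ) - (n:ℝ)) by ring,
              Real.rpow_add two_pos, Real.rpow_sub two_pos,
              Real.rpow_natCast, Real.rpow_natCast]
            ring
    · -- second inequality
      rcases Nat.eq_zero_or_pos d with rfl | hdpos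
      · have hc0 : c = 0 := by omega
        have ha0 : a = ε := by omega
        rw [hc0, ha0, pow_zero, mul_one]
      · have hε : 1 ≤ ε := by omega
        have hc1 : 1 ≤ c := by omega
        have hp0 : 0 < (ε:ℝ)/n := by
          apply div_pos _ hn'
          exact_mod_cast hε
        have h1p : 0 < 1 - (ε:ℝ)/n := by linarith
        have hr0 : 0 < ((ε:ℝ)/n)/(1 - (ε:ℝ)/n) := div_pos hp0 h1p
        have hlog2 : (0:ℝ) < Real.log 2 := Real.log_pos (by norm_num)
        set p : ℝ := (ε:ℝ)/n with hpdef
        set q : ℝ := (a:ℝ)/n with hqdef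
        have hnp : (n:ℝ) * p = ε := by rw [hpdef, mul_div_cancel₀ _ hn'.ne']
        have hnq : (n:ℝ) * q = a := by rw [hqdef, mul_div_cancel₀ _ hn'.ne']
        have hcr : (c:ℝ) = (ε:ℝ) - (a:ℝ) := by rw [hacast]; ring
        have hq0 : 0 ≤ q := by positivity
        have hqp : q ≤ p := by
          rw [hqdef, hpdef]
          gcongr
          · omega
        have h1q : 0 < 1 - q := by linarith
        -- natural-log key inequality
        have E1 : (n:ℝ) * (-q * Real.log q - (1-q) * Real.log (1-q))
            = -(a:ℝ) * Real.log q - ((n:ℝ) - (a:ℝ)) * Real.log (1-q) := by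
          linear_combination (- Real.log q + Real.log (1-q)) * hnq
        have E2 : (n:ℝ) * (-p * Real.log p - (1-p) * Real.log (1-p))
              + (c:ℝ) * (Real.log p - Real.log (1-p))
            = -(a:ℝ) * Real.log p - ((n:ℝ) - (a:ℝ)) * Real.log (1-p) := by
          linear_combination (- Real.log p + Real.log (1-p)) * hnp
            + (Real.log p - Real.log (1-p)) * hcr
        have hna : (a:ℝ) ≤ (n:ℝ) := by
          have : (a:ℕ) ≤ n := by omega
          exact_mod_cast this
        have keyln : (n:ℝ) * (-q * Real.log q - (1-q) * Real.log (1-q))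
            ≤ (n:ℝ) * (-p * Real.log p - (1-p) * Real.log (1-p))
              + (c:ℝ) * (Real.log p - Real.log (1-p)) := by
          rcases Nat.eq_zero_or_pos a with ha0 | hapos
          · have hq00 : q = 0 := by rw [hqdef, ha0]; norm_num
            have hl4 : Real.log (1-p) ≤ 0 := Real.log_nonpos h1p.le (by linarith)
            have hnn : 0 ≤ -((n:ℝ)) * Real.log (1-p) := by nlinarith [hn'.le]
            have ha0' : (a:ℝ) = 0 := by rw [ha0]; norm_num
            rw [E1, E2, hq00, ha0']
            simp only [Real.log_one, sub_zero, neg_zero, zero_mul, mul_zero, zero_sub]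
            linarith
          · have haR : (0:ℝ) < a := by exact_mod_cast hapos
            have hq0' : 0 < q := by rw [hqdef]; positivity
            have e1 := Real.log_le_sub_one_of_pos (div_pos hp0 hq0')
            rw [Real.log_div hp0.ne' hq0'.ne'] at e1
            have e2 := Real.log_le_sub_one_of_pos (div_pos h1p h1q)
            rw [Real.log_div h1p.ne' h1q.ne'] at e2
            have f1 : (a:ℝ) * (p/q - 1) = (ε:ℝ) - a := by
              have h : (a:ℝ) * (p/q) = ε := by
                rw [← hnq, ← hnp]
                field_simp
              linear_combination h
            have f2 : ((n:ℝ) - a) * ((1-p)/(1-q) - 1) = (a:ℝ) - ε := by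
              have hnq1 : (n:ℝ) * (1-q) = (n:ℝ) - a := by linear_combination - hnq
              have h : ((n:ℝ) - a) * ((1-p)/(1-q)) = (n:ℝ) - ε := by
                rw [← hnq1, show (n:ℝ) * (1-q) * ((1-p)/(1-q)) = (n:ℝ) * (1-p) by
                  field_simp]
                linear_combination - hnp
              linear_combination h
            have m1 : (a:ℝ) * (Real.log p - Real.log q) ≤ (ε:ℝ) - a := by
              have := mul_le_mul_of_nonneg_left e1 haR.le
              linarith [f1]
            have m2 : ((n:ℝ) - a) * (Real.log (1-p) - Real.log (1-q)) ≤ (a:ℝ) - ε := by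
              have := mul_le_mul_of_nonneg_left e2 (by linarith : (0:ℝ) ≤ (n:ℝ) - a)
              linarith [f2]
            linarith [E1, E2, m1, m2]
        have key : (n:ℝ) * binH q ≤ (n:ℝ) * binH p + (c:ℝ) * Real.logb 2 (p/(1-p)) := by
          rw [binH, binH, Real.logb, Real.logb, Real.logb, Real.logb, Real.logb,
            Real.log_div hp0.ne' h1p.ne']
          rw [show (n:ℝ) * (-q * (Real.log q / Real.log 2) - (1-q) * (Real.log (1-q) / Real.log 2))
              = ((n:ℝ) * (-q * Real.log q - (1-q) * Real.log (1-q))) / Real.log 2 by ring,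
            show (n:ℝ) * (-p * (Real.log p / Real.log 2) - (1-p) * (Real.log (1-p) / Real.log 2))
              + (c:ℝ) * ((Real.log p - Real.log (1-p)) / Real.log 2)
              = ((n:ℝ) * (-p * Real.log p - (1-p) * Real.log (1-p))
                + (c:ℝ) * (Real.log p - Real.log (1-p))) / Real.log 2 by ring]
          exact (div_le_div_iff_of_pos_right hlog2).2 keyln
        calc (2:ℝ) ^ ((n:ℝ) * (binH q - 1) + d)
            ≤ (2:ℝ) ^ ((n:ℝ) * (binH p - 1) + d + (c:ℝ) * Real.logb 2 (p/(1-p))) := by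
              apply Real.rpow_le_rpow_of_exponent_le (by norm_num)
              linarith [key]
          _ = (2:ℝ) ^ ((n:ℝ) * (binH p - 1) + d) * (p/(1-p)) ^ c := by
              rw [Real.rpow_add two_pos]
              congr 1
              rw [mul_comm, Real.rpow_mul (by norm_num : (0:ℝ) ≤ 2),
                Real.rpow_logb two_pos (by norm_num) hr0, Real.rpow_natCast]
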